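/- Let p ∈ ℕ, a ∈ ℝ, and let f be p-times continuously differentiable on [a, a+p]. Then Δ^p f(a) = (−1)^p ∫_{[0,1]^p} f^{(p)}(a + t₁ + ⋯ + t_p) dt₁ ⋯ dt_p, where Δf(x) = f(x) − f(x+1) and Δ^{p+1} f(x) = Δ^p f(x) − Δ^p f(x+1). -/

import Mathlib

open MeasureTheory

noncomputable section

/-- Forward difference operator on functions: `(Δf)(x) = f(x) - f(x+1)`. -/
def fdiffFun (f : ℝ → ℝ) : ℝ → ℝ := fun x => f x - f (x + 1)

section Helpers
open MeasureTheory Set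

lemma iteratedDerivWithin_subset_aux {n : ℕ} {f : ℝ → ℝ} {s t : Set ℝ}
    (hst : s ⊆ t) (hs : UniqueDiffOn ℝ s) (ht : UniqueDiffOn ℝ t)
    (hf : ContDiffOn ℝ n f t) {x : ℝ} (hx : x ∈ s) :
    iteratedDerivWithin n f s x = iteratedDerivWithin n f t x := by
  have h := ((hf.ftaylorSeriesWithin ht).mono hst).eq_iteratedFDerivWithin_of_uniqueDiffOn
    le_rfl hs hx
  simp only [iteratedDerivWithin, ← h]
  rfl
open MeasureTheory Set intervalIntegral

lemma ftc_aux {p : ℕ} {f : ℝ → ℝ} {a b x : ℝ} (hab : a < b) (hx : a ≤ x) (hx1 : x + 1 ≤ b)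
    (hf : ContDiffOn ℝ (p + 1 : ℕ) f (Icc a b)) :
    ∫ y in x..(x + 1), iteratedDerivWithin (p + 1) f (Icc a b) y
      = iteratedDerivWithin p f (Icc a b) (x + 1) - iteratedDerivWithin p f (Icc a b) x := by
  have hS : UniqueDiffOn ℝ (Icc a b) := uniqueDiffOn_Icc hab
  have hsub : Icc x (x + 1) ⊆ Icc a b := Icc_subset_Icc hx (by linarith)
  have hcont : ContinuousOn (iteratedDerivWithin p f (Icc a b)) (Icc a b) :=
    hf.continuousOn_iteratedDerivWithin (by exact_mod_cast Nat.le_succ p) hS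
  have hcont' : ContinuousOn (iteratedDerivWithin (p + 1) f (Icc a b)) (Icc a b) :=
    hf.continuousOn_iteratedDerivWithin le_rfl hS
  have hdiff : DifferentiableOn ℝ (iteratedDerivWithin p f (Icc a b)) (Icc a b) :=
    hf.differentiableOn_iteratedDerivWithin (by exact_mod_cast Nat.lt_succ_self p) hS
  apply integral_eq_sub_of_hasDeriv_right_of_le (by linarith) (hcont.mono hsub)
  · intro y hy
    have hyS : y ∈ Icc a b := ⟨by linarith [hy.1], by linarith [hy.2]⟩
    have h1 := (hdiff y hyS).hasDerivWithinAt
    have h2 : HasDerivAt (iteratedDerivWithin p f (Icc a b))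
        (derivWithin (iteratedDerivWithin p f (Icc a b)) (Icc a b) y) y :=
      h1.hasDerivAt (Icc_mem_nhds (by linarith [hy.1]) (by linarith [hy.2]))
    rw [iteratedDerivWithin_succ]
    exact h2.hasDerivWithinAt
  · exact ContinuousOn.intervalIntegrable (by rw [uIcc_of_le (by linarith : x ≤ x + 1)]; exact hcont'.mono hsub)
open MeasureTheory Set

set_option maxHeartbeats 1000000 in
lemma box_split {p : ℕ} (G : ℝ → ℝ) (c : ℝ)
    (hG : ContinuousOn G (Icc c (c + (p + 1 : ℕ)))) :
    ∫ t in univ.pi (fun _ : Fin (p + 1) => Icc (0:ℝ) 1), G (c + ∑ i, t i)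
      = ∫ u in univ.pi (fun _ : Fin p => Icc (0:ℝ) 1),
          ∫ s in Icc (0:ℝ) 1, G (c + s + ∑ i, u i) := by
  set e := MeasurableEquiv.piFinSuccAbove (fun _ : Fin (p + 1) => ℝ) 0 with he
  have hmp : MeasurePreserving e volume volume :=
    volume_preserving_piFinSuccAbove (fun _ : Fin (p + 1) => ℝ) 0
  set g : ℝ × (Fin p → ℝ) → ℝ := fun q => G (c + q.1 + ∑ i, q.2 i) with hg
  have hpre : univ.pi (fun _ : Fin (p + 1) => Icc (0:ℝ) 1)
      = e ⁻¹' ((Icc (0:ℝ) 1) ×ˢ univ.pi fun _ : Fin p => Icc (0:ℝ) 1) := by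
    ext t
    simp only [mem_pi, mem_univ, true_implies, mem_preimage, he,
      MeasurableEquiv.piFinSuccAbove_apply, mem_prod, Fin.succAbove_zero,
      Fin.insertNthEquiv_symm_apply, Fin.removeNth]
    constructor
    · intro h; exact ⟨h 0, fun j => h _⟩
    · rintro ⟨h0, hs⟩ i
      rcases Fin.eq_zero_or_eq_succ i with rfl | ⟨j, rfl⟩
      exacts [h0, by simpa [Fin.succAbove_zero] using hs j]
  have hcomp : ∀ t : Fin (p + 1) → ℝ, G (c + ∑ i, t i) = g (e t) := by
    intro t
    simp only [hg, he, MeasurableEquiv.piFinSuccAbove_apply, Fin.succAbove_zero]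
    rw [Fin.sum_univ_succ, ← add_assoc]
    rfl
  -- continuity / integrability of g on the product box
  have hmaps : MapsTo (fun q : ℝ × (Fin p → ℝ) => c + q.1 + ∑ i, q.2 i)
      ((Icc (0:ℝ) 1) ×ˢ univ.pi fun _ : Fin p => Icc (0:ℝ) 1) (Icc c (c + (p + 1 : ℕ))) := by
    rintro ⟨s, u⟩ ⟨hs, hu⟩
    simp only [mem_Icc] at hs ⊢
    have h1 : (0:ℝ) ≤ ∑ i, u i := Finset.sum_nonneg fun i _ => (hu i (mem_univ i)).1
    have h2 : ∑ i, u i ≤ (p : ℝ) := by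
      calc ∑ i, u i ≤ ∑ _i : Fin p, (1:ℝ) :=
            Finset.sum_le_sum fun i _ => (hu i (mem_univ i)).2
        _ = p := by simp
    constructor <;> push_cast <;> linarith [hs.1, hs.2]
  have hgc : ContinuousOn g ((Icc (0:ℝ) 1) ×ˢ univ.pi fun _ : Fin p => Icc (0:ℝ) 1) := by
    apply hG.comp _ hmaps
    fun_prop
  have hcompact : IsCompact ((Icc (0:ℝ) 1) ×ˢ univ.pi fun _ : Fin p => Icc (0:ℝ) 1) :=
    isCompact_Icc.prod (isCompact_univ_pi fun _ => isCompact_Icc)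
  have hint : IntegrableOn g ((Icc (0:ℝ) 1) ×ˢ univ.pi fun _ : Fin p => Icc (0:ℝ) 1) volume :=
    hgc.integrableOn_compact hcompact
  calc ∫ t in univ.pi (fun _ : Fin (p + 1) => Icc (0:ℝ) 1), G (c + ∑ i, t i)
      = ∫ t in e ⁻¹' ((Icc (0:ℝ) 1) ×ˢ univ.pi fun _ : Fin p => Icc (0:ℝ) 1), g (e t) := by
        rw [← hpre]; exact setIntegral_congr_fun (MeasurableSet.univ_pi fun _ => measurableSet_Icc) fun t _ => hcomp t
    _ = ∫ y in (Icc (0:ℝ) 1) ×ˢ univ.pi fun _ : Fin p => Icc (0:ℝ) 1, g y :=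
        hmp.setIntegral_preimage_emb (MeasurableEquiv.measurableEmbedding e) _ _
    _ = ∫ s in Icc (0:ℝ) 1, ∫ u in univ.pi fun _ : Fin p => Icc (0:ℝ) 1, g (s, u) := by
        rw [Measure.volume_eq_prod] at hint ⊢
        exact setIntegral_prod g hint
    _ = ∫ u in univ.pi fun _ : Fin p => Icc (0:ℝ) 1, ∫ s in Icc (0:ℝ) 1, g (s, u) := by
        refine integral_integral_swap (μ := (volume : Measure ℝ).restrict (Icc 0 1))
          (ν := (volume : Measure (Fin p → ℝ)).restrict (univ.pi fun _ => Icc 0 1))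
          (f := fun s u => g (s, u)) ?_
        rw [Measure.prod_restrict]
        rw [Measure.volume_eq_prod] at hint
        exact hint

end Helpers

open Set intervalIntegral

/-- If `f` is `p`-times continuously differentiable on `[a, a+p]`, then
`Δ^p f(a) = (-1)^p ∫_{[0,1]^p} f^{(p)}(a + t₁ + ⋯ + t_p) dt₁ ⋯ dt_p`. -/
theorem fdiff_eq_integral_iteratedDeriv (p : ℕ) (a : ℝ) (f : ℝ → ℝ)
    (hf : ContDiffOn ℝ p f (Set.Icc a (a + p))) :
    fdiffFun^[p] f a
      = (-1 : ℝ) ^ p *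
        ∫ t in Set.univ.pi fun _ : Fin p => Set.Icc (0:ℝ) 1,
          iteratedDerivWithin p f (Set.Icc a (a + p)) (a + ∑ i, t i) := by
  induction p generalizing a f with
  | zero =>
    simp only [Function.iterate_zero, id_eq, pow_zero, one_mul, iteratedDerivWithin_zero,
      Finset.univ_eq_empty, Finset.sum_empty, add_zero]
    have h1 : (univ.pi fun _ : Fin 0 => Icc (0:ℝ) 1) = univ := by ext t; simp
    rw [h1, setIntegral_univ, MeasureTheory.integral_const]
    simp [volume_pi, Measure.pi_empty_univ, measureReal_def]
  | succ p IH =>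
    have hb : a < a + ((p + 1 : ℕ) : ℝ) := by push_cast; linarith
    set S := Icc a (a + ((p + 1 : ℕ) : ℝ)) with hSdef
    have hS : UniqueDiffOn ℝ S := uniqueDiffOn_Icc hb
    have hfp : ContDiffOn ℝ p f S := hf.of_le (by exact_mod_cast Nat.le_succ p)
    -- membership of box points
    have hmem : ∀ t : Fin p → ℝ, t ∈ univ.pi (fun _ : Fin p => Icc (0:ℝ) 1) →
        (0:ℝ) ≤ ∑ i, t i ∧ ∑ i, t i ≤ (p:ℝ) := by
      intro t ht
      simp only [mem_pi, mem_univ, true_implies] at ht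
      refine ⟨Finset.sum_nonneg fun i _ => (ht i).1, ?_⟩
      calc ∑ i, t i ≤ ∑ _i : Fin p, (1:ℝ) := Finset.sum_le_sum fun i _ => (ht i).2
        _ = p := by simp
    -- set change lemma
    have hchg : ∀ c : ℝ, a ≤ c → c + (p:ℝ) ≤ a + ((p+1:ℕ):ℝ) →
        ∀ x ∈ Icc c (c + (p:ℝ)),
          iteratedDerivWithin p f (Icc c (c + (p:ℝ))) x = iteratedDerivWithin p f S x := by
      intro c hc1 hc2 x hx
      rcases Nat.eq_zero_or_pos p with rfl | hp
      · simp
      · have hcp : c < c + (p:ℝ) := by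
          have : (0:ℝ) < p := by exact_mod_cast hp
          linarith
        exact iteratedDerivWithin_subset_aux (Icc_subset_Icc hc1 hc2)
          (uniqueDiffOn_Icc hcp) hS hfp hx
    have hbox : MeasurableSet (univ.pi fun _ : Fin p => Icc (0:ℝ) 1) :=
      MeasurableSet.univ_pi fun _ => measurableSet_Icc
    have hcpt : IsCompact (univ.pi fun _ : Fin p => Icc (0:ℝ) 1) :=
      isCompact_univ_pi fun _ => isCompact_Icc
    have hcontp : ContinuousOn (iteratedDerivWithin p f S) S :=
      hf.continuousOn_iteratedDerivWithin (by exact_mod_cast Nat.le_succ p) hS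
    have hcontp1 : ContinuousOn (iteratedDerivWithin (p+1) f S) S :=
      hf.continuousOn_iteratedDerivWithin le_rfl hS
    -- integrability of the two shifted integrands
    have hIntg : ∀ c : ℝ, a ≤ c → c + (p:ℝ) ≤ a + ((p+1:ℕ):ℝ) →
        IntegrableOn (fun u : Fin p → ℝ => iteratedDerivWithin p f S (c + ∑ i, u i))
          (univ.pi fun _ : Fin p => Icc (0:ℝ) 1) volume := by
      intro c hc1 hc2
      apply ContinuousOn.integrableOn_compact hcpt
      apply hcontp.comp (by fun_prop)
      intro u hu
      have h := hmem u hu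
      simp only [hSdef, mem_Icc]
      constructor
      · linarith [h.1]
      · linarith [h.2]
    -- IH at a and a+1, with set changed to S
    have hA : fdiffFun^[p] f a
        = (-1:ℝ)^p * ∫ u in univ.pi fun _ : Fin p => Icc (0:ℝ) 1,
            iteratedDerivWithin p f S (a + ∑ i, u i) := by
      rw [IH a f (hfp.mono (Icc_subset_Icc le_rfl (by push_cast; linarith)))]
      congr 1
      refine setIntegral_congr_fun hbox fun u hu => ?_
      exact hchg a le_rfl (by push_cast; linarith) _
        ⟨by linarith [(hmem u hu).1], by linarith [(hmem u hu).2]⟩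
    have hB : fdiffFun^[p] f (a + 1)
        = (-1:ℝ)^p * ∫ u in univ.pi fun _ : Fin p => Icc (0:ℝ) 1,
            iteratedDerivWithin p f S (a + 1 + ∑ i, u i) := by
      rw [IH (a+1) f (hfp.mono (Icc_subset_Icc (by linarith) (by push_cast; linarith)))]
      congr 1
      refine setIntegral_congr_fun hbox fun u hu => ?_
      exact hchg (a+1) (by linarith) (by push_cast; linarith) _
        ⟨by linarith [(hmem u hu).1], by linarith [(hmem u hu).2]⟩
    -- the key integral identity
    have hkey : (∫ t in univ.pi fun _ : Fin (p+1) => Icc (0:ℝ) 1,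
          iteratedDerivWithin (p+1) f S (a + ∑ i, t i))
        = (∫ u in univ.pi fun _ : Fin p => Icc (0:ℝ) 1,
            iteratedDerivWithin p f S (a + 1 + ∑ i, u i))
          - ∫ u in univ.pi fun _ : Fin p => Icc (0:ℝ) 1,
              iteratedDerivWithin p f S (a + ∑ i, u i) := by
      rw [box_split (iteratedDerivWithin (p+1) f S) a hcontp1]
      have hstep : ∀ u ∈ univ.pi fun _ : Fin p => Icc (0:ℝ) 1,
          (∫ s in Icc (0:ℝ) 1, iteratedDerivWithin (p+1) f S (a + s + ∑ i, u i))
            = iteratedDerivWithin p f S (a + 1 + ∑ i, u i)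
              - iteratedDerivWithin p f S (a + ∑ i, u i) := by
        intro u hu
        set x := a + ∑ i, u i with hx
        have h1 : ∀ s : ℝ, a + s + ∑ i, u i = x + s := by intro s; rw [hx]; ring
        have h2 : a + 1 + ∑ i, u i = x + 1 := by rw [hx]; ring
        simp only [h1, h2]
        rw [MeasureTheory.integral_Icc_eq_integral_Ioc,
          ← intervalIntegral.integral_of_le (by norm_num : (0:ℝ) ≤ 1),
          intervalIntegral.integral_comp_add_left (iteratedDerivWithin (p+1) f S) x]
        rw [add_zero]
        exact ftc_aux hb (by linarith [(hmem u hu).1]) (by push_cast; linarith [(hmem u hu).2]) hf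
      rw [setIntegral_congr_fun hbox hstep]
      exact integral_sub (hIntg (a+1) (by linarith) (by push_cast; linarith))
        (hIntg a le_rfl (by push_cast; linarith))
    rw [Function.iterate_succ_apply' fdiffFun p f]
    show fdiffFun^[p] f a - fdiffFun^[p] f (a + 1) = _
    rw [hA, hB]
    push_cast [hkey] at *
    rw [hkey]
    ring

end
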